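/- Let D be a metric on ℂ that induces the Euclidean topology, let m ∈ ℕ, and suppose that the D-distance between the square [0,2]² and the complement ℂ∖B_2([0,2]²) of its open Euclidean 2-neighborhood is strictly greater than 2^{−m}. Then the squares of R_m(D) cover the unit square: every point of [0,1]² lies in some square S ∈ R_m(D). -/

import Mathlib

open scoped ENNReal NNReal

noncomputable section

/-- Distance in an alternative metric `D` on `ℂ`. -/
def mdist (D : MetricSpace ℂ) (a b : ℂ) : ℝ := @dist ℂ D.toDist a b

/-- The `D`-distance between two sets: `inf {D(a,b) : a ∈ A, b ∈ B}`. -/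
def msetDist (D : MetricSpace ℂ) (A B : Set ℂ) : ℝ :=
  sInf {r : ℝ | ∃ a ∈ A, ∃ b ∈ B, r = mdist D a b}

/-- The `D`-diameter of a set: `sup {D(u,v) : u, v ∈ A}`. -/
def mdiam (D : MetricSpace ℂ) (A : Set ℂ) : ℝ≥0∞ :=
  @EMetric.diam ℂ (@PseudoMetricSpace.toPseudoEMetricSpace ℂ D.toPseudoMetricSpace) A

/-- Hausdorff dimension of `X` as a subset of the metric space `(ℂ, D)`. -/
def mdimH (D : MetricSpace ℂ) (X : Set ℂ) : ℝ≥0∞ :=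
  @dimH ℂ (@MetricSpace.toEMetricSpace ℂ D) X

/-- The open Euclidean `r`-neighborhood of a set `A ⊆ ℂ`. -/
def euclNbhd (r : ℝ) (A : Set ℂ) : Set ℂ := {z | ∃ a ∈ A, dist z a < r}

/-- The dyadic square `[j 2^(-n), (j+1) 2^(-n)] × [k 2^(-n), (k+1) 2^(-n)]` in `ℂ ≅ ℝ²`. -/
def dyadicSquare (n j k : ℤ) : Set ℂ :=
  {z : ℂ | z.re ∈ Set.Icc ((j : ℝ) * 2 ^ (-n)) (((j : ℝ) + 1) * 2 ^ (-n)) ∧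
           z.im ∈ Set.Icc ((k : ℝ) * 2 ^ (-n)) (((k : ℝ) + 1) * 2 ^ (-n))}

/-- The `D`-length of a path restricted to a set: the supremum over all finite increasing
sequences of sample points in the set of the sums of consecutive `D`-distances. -/
def mpathLength (D : MetricSpace ℂ) (P : ℝ → ℂ) (s : Set ℝ) : ℝ≥0∞ :=
  @eVariationOn ℝ _ ℂ (@PseudoMetricSpace.toPseudoEMetricSpace ℂ D.toPseudoMetricSpace) P s

/-- `(ℂ, D)` is a length space: `D(x,y)` is the infimum of the `D`-lengths of continuous
paths from `x` to `y`. -/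
def IsLengthSpace (D : MetricSpace ℂ) : Prop :=
  ∀ x y : ℂ,
    ENNReal.ofReal (mdist D x y) =
      ⨅ (P : ℝ → ℂ) (_ : ContinuousOn P (Set.Icc 0 1)) (_ : P 0 = x) (_ : P 1 = y),
        mpathLength D P (Set.Icc 0 1)

/-- The collection `R_m(D)`, encoded by triples `(n, j, k)` with `S = dyadicSquare n j k ⊆ [0,1]²`:
those dyadic squares `S ⊆ [0,1]²` with `D(S, ℂ ∖ B_{|S|}(S)) ≤ 2^{-m}` and
`D(S', ℂ ∖ B_{|S'|}(S')) > 2^{-m}` for the dyadic parent `S'`. -/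
def RmSet (D : MetricSpace ℂ) (m : ℕ) : Set (ℕ × ℕ × ℕ) :=
  {p | p.2.1 < 2 ^ p.1 ∧ p.2.2 < 2 ^ p.1 ∧
    msetDist D (dyadicSquare p.1 p.2.1 p.2.2)
      ((euclNbhd (2 ^ (-(p.1 : ℤ))) (dyadicSquare p.1 p.2.1 p.2.2))ᶜ) ≤ 2 ^ (-(m : ℤ)) ∧
    (2 : ℝ) ^ (-(m : ℤ)) <
      msetDist D (dyadicSquare ((p.1 : ℤ) - 1) (p.2.1 / 2) (p.2.2 / 2))
        ((euclNbhd (2 ^ (-((p.1 : ℤ) - 1)))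
          (dyadicSquare ((p.1 : ℤ) - 1) (p.2.1 / 2) (p.2.2 / 2)))ᶜ)}

/-- The unit square `[0,1]²` in `ℂ`. -/
def unitSquare : Set ℂ := dyadicSquare 0 0 0

-- auxiliary lemmas
lemma msetDist_le (D : MetricSpace ℂ) {A B : Set ℂ} {a b : ℂ} (ha : a ∈ A) (hb : b ∈ B) :
    msetDist D A B ≤ mdist D a b := by
  apply csInf_le
  · refine ⟨0, ?_⟩
    rintro r ⟨a', _, b', _, rfl⟩
    exact @dist_nonneg ℂ D.toPseudoMetricSpace a' b'
  · exact ⟨a, ha, b, hb, rfl⟩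

def idx (x : ℝ) (n : ℕ) : ℕ := min ⌊x * 2 ^ n⌋₊ (2 ^ n - 1)

lemma idx_lt (x : ℝ) (n : ℕ) : idx x n < 2 ^ n :=
  lt_of_le_of_lt (min_le_right _ _) (Nat.sub_lt (Nat.two_pow_pos n) one_pos)

lemma idx_le {x : ℝ} (h0 : 0 ≤ x) (n : ℕ) : (idx x n : ℝ) * 2 ^ (-(n : ℤ)) ≤ x := by
  rw [zpow_neg, zpow_natCast, ← div_eq_mul_inv, div_le_iff₀ (by positivity)]
  calc (idx x n : ℝ) ≤ (⌊x * 2 ^ n⌋₊ : ℝ) := Nat.cast_le.mpr (min_le_left _ _)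
    _ ≤ x * 2 ^ n := Nat.floor_le (by positivity)

lemma le_idx {x : ℝ} (h0 : 0 ≤ x) (h1 : x ≤ 1) (n : ℕ) :
    x ≤ ((idx x n : ℝ) + 1) * 2 ^ (-(n : ℤ)) := by
  rw [zpow_neg, zpow_natCast, ← div_eq_mul_inv, le_div_iff₀ (by positivity)]
  rcases min_cases (⌊x * 2 ^ n⌋₊) (2 ^ n - 1) with ⟨h, _⟩ | ⟨h, _⟩ <;> rw [idx, h]
  · exact le_of_lt (Nat.lt_floor_add_one _)
  · have : ((2 ^ n - 1 : ℕ) : ℝ) = 2 ^ n - 1 := by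
      have : (1 : ℕ) ≤ 2 ^ n := Nat.one_le_two_pow
      push_cast [Nat.cast_sub this]
      ring
    rw [this]
    nlinarith [pow_pos (by norm_num : (0:ℝ) < 2) n]

lemma idx_succ_div {x : ℝ} (h0 : 0 ≤ x) (n : ℕ) : idx x (n + 1) / 2 = idx x n := by
  have hmin : ∀ a b : ℕ, min a b / 2 = min (a / 2) (b / 2) := by
    intro a b
    rcases le_total a b with h | h
    · rw [min_eq_left h, min_eq_left (Nat.div_le_div_right h)]
    · rw [min_eq_right h, min_eq_right (Nat.div_le_div_right h)]
  rw [idx, idx, hmin]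
  congr 1
  · have := Nat.floor_div_natCast (x * 2 ^ (n + 1)) 2
    rw [← this]
    congr 1
    push_cast
    ring
  · have h1 : (1:ℕ) ≤ 2 ^ n := Nat.one_le_two_pow
    have : 2 ^ (n + 1) = 2 * 2 ^ n := by ring
    omega

lemma mem_dyadic {z : ℂ} (h0 : 0 ≤ z.re) (h1 : z.re ≤ 1) (h0' : 0 ≤ z.im) (h1' : z.im ≤ 1)
    (n : ℕ) : z ∈ dyadicSquare n (idx z.re n) (idx z.im n) := by
  constructor <;> constructor
  · exact_mod_cast idx_le h0 n
  · exact_mod_cast le_idx h0 h1 n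
  · exact_mod_cast idx_le h0' n
  · exact_mod_cast le_idx h0' h1' n

lemma outside_mem {n j k : ℤ} {z : ℂ} (hz : z ∈ dyadicSquare n j k) :
    (z + ((3 * 2 ^ (-n) : ℝ) : ℂ)) ∈ (euclNbhd (2 ^ (-n)) (dyadicSquare n j k))ᶜ := by
  rintro ⟨a, ha, hlt⟩
  have hre : ((z + ((3 * 2 ^ (-n) : ℝ) : ℂ)) - a).re ≤
      dist (z + ((3 * 2 ^ (-n) : ℝ) : ℂ)) a := by
    rw [Complex.dist_eq]
    exact le_trans (le_abs_self _) (Complex.abs_re_le_norm _)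
  have h1 : (j : ℝ) * 2 ^ (-n) ≤ z.re := hz.1.1
  have h2 : a.re ≤ ((j : ℝ) + 1) * 2 ^ (-n) := ha.1.2
  have hpos : (0:ℝ) < 2 ^ (-n) := by positivity
  simp only [Complex.sub_re, Complex.add_re, Complex.ofReal_re] at hre
  nlinarith

/-- If `D` induces the Euclidean topology and the `D`-distance between `[0,2]²`
and the complement of its open Euclidean `2`-neighborhood exceeds `2^{-m}`, then the squares of
`R_m(D)` cover the unit square `[0,1]²`. -/
theorem RmSet_covers (D : MetricSpace ℂ)
    (htop : D.toUniformSpace.toTopologicalSpace = (inferInstance : TopologicalSpace ℂ))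
    (m : ℕ)
    (hbig : (2 : ℝ) ^ (-(m : ℤ)) <
      msetDist D (dyadicSquare (-1) 0 0) ((euclNbhd 2 (dyadicSquare (-1) 0 0))ᶜ)) :
    ∀ z ∈ unitSquare, ∃ p ∈ RmSet D m, z ∈ dyadicSquare p.1 p.2.1 p.2.2 := by
  intro z hz
  obtain ⟨⟨hre0, hre1⟩, him0, him1⟩ := hz
  simp only [Int.cast_zero, zero_mul, neg_zero, zpow_zero, zero_add, one_mul] at hre0 hre1 him0 him1
  set g : ℕ → ℝ := fun n =>
    msetDist D (dyadicSquare n (idx z.re n) (idx z.im n))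
      ((euclNbhd (2 ^ (-(n : ℤ))) (dyadicSquare n (idx z.re n) (idx z.im n)))ᶜ) with hg
  have hmem : ∀ n : ℕ, z ∈ dyadicSquare n (idx z.re n) (idx z.im n) :=
    fun n => mem_dyadic hre0 hre1 him0 him1 n
  have hex : ∃ n : ℕ, g n ≤ 2 ^ (-(m : ℤ)) := by
    have hεpos : (0:ℝ) < 2 ^ (-(m : ℤ)) := by positivity
    have hopen : IsOpen (@Metric.ball ℂ D.toPseudoMetricSpace z (2 ^ (-(m : ℤ)))) := by
      have h1 : @IsOpen ℂ D.toUniformSpace.toTopologicalSpace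
          (@Metric.ball ℂ D.toPseudoMetricSpace z (2 ^ (-(m : ℤ)))) :=
        @Metric.isOpen_ball ℂ D.toPseudoMetricSpace z _
      rw [htop] at h1
      exact h1
    have hzmem : z ∈ @Metric.ball ℂ D.toPseudoMetricSpace z (2 ^ (-(m : ℤ))) :=
      @Metric.mem_ball_self ℂ D.toPseudoMetricSpace z _ hεpos
    obtain ⟨δ, hδ, hball⟩ := Metric.isOpen_iff.mp hopen z hzmem
    obtain ⟨n, hn⟩ := exists_pow_lt_of_lt_one (show (0:ℝ) < δ / 3 by linarith)
      (by norm_num : (1:ℝ)/2 < 1)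
    have hpow : (2:ℝ) ^ (-(n : ℤ)) = (1/2) ^ n := by
      rw [zpow_neg, zpow_natCast, one_div, inv_pow]
    refine ⟨n, ?_⟩
    set b : ℂ := z + ((3 * 2 ^ (-(n:ℤ)) : ℝ) : ℂ) with hb
    have hbout := outside_mem (hmem n)
    have hbz : b ∈ Metric.ball z δ := by
      have habs : ‖b - z‖ < δ := by
        have he : b - z = ((3 * 2 ^ (-(n:ℤ)) : ℝ) : ℂ) := by rw [hb]; ring
        rw [he, Complex.norm_real, Real.norm_eq_abs, abs_of_pos (by positivity)]
        rw [hpow] at *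
        linarith
      rw [Metric.mem_ball, Complex.dist_eq]
      exact habs
    have hbD : mdist D z b < 2 ^ (-(m : ℤ)) := by
      have h2 : @dist ℂ D.toPseudoMetricSpace.toDist b z < 2 ^ (-(m : ℤ)) := hball hbz
      calc mdist D z b = @dist ℂ D.toPseudoMetricSpace.toDist b z :=
            @dist_comm ℂ D.toPseudoMetricSpace z b
        _ < _ := h2
    exact le_of_lt (lt_of_le_of_lt (msetDist_le D (hmem n) hbout) hbD)
  classical
  have hspec := Nat.find_spec hex
  obtain ⟨n₀, hfind⟩ : ∃ k, Nat.find hex = k := ⟨_, rfl⟩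
  rw [hfind] at hspec
  have hmin' : ∀ k, k < n₀ → ¬ g k ≤ 2 ^ (-(m : ℤ)) := fun k hk =>
    Nat.find_min hex (by omega)
  have hparent : (2 : ℝ) ^ (-(m : ℤ)) <
      msetDist D (dyadicSquare ((n₀ : ℤ) - 1) (idx z.re n₀ / 2) (idx z.im n₀ / 2))
        ((euclNbhd (2 ^ (-((n₀ : ℤ) - 1)))
          (dyadicSquare ((n₀ : ℤ) - 1) (idx z.re n₀ / 2) (idx z.im n₀ / 2)))ᶜ) := by
    cases n₀ with
    | zero =>
      have hJ : idx z.re 0 = 0 := by simp [idx]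
      have hK : idx z.im 0 = 0 := by simp [idx]
      rw [hJ, hK]
      convert hbig using 3 <;> norm_num
    | succ n =>
      have hmin := hmin' n (Nat.lt_succ_self n)
      rw [not_le] at hmin
      have hJ : idx z.re (n+1) / 2 = idx z.re n := idx_succ_div hre0 n
      have hK : idx z.im (n+1) / 2 = idx z.im n := idx_succ_div him0 n
      have hJ' : (idx z.re (n+1) : ℤ) / 2 = (idx z.re n : ℤ) := by omega
      have hK' : (idx z.im (n+1) : ℤ) / 2 = (idx z.im n : ℤ) := by omega
      have hcast : ((n + 1 : ℕ) : ℤ) - 1 = (n : ℤ) := by push_cast; ring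
      rw [hJ', hK', hcast]
      exact hmin
  exact ⟨(n₀, idx z.re n₀, idx z.im n₀),
    ⟨idx_lt _ _, idx_lt _ _, hspec, hparent⟩, hmem n₀⟩
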